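/- Fix integers n ≥ 2 and N ≥ 1, an open set Ω ⊆ (Fin n → ℂ) on which the coordinate functions λ₁,…,λ_n are pairwise distinct, and differentiable functions A_j : Ω → Matrix (Fin N) (Fin N) ℂ satisfying the Schlesinger system on Ω: ∂A_j/∂λ_k = [A_j,A_k]/(λ_j−λ_k) for j ≠ k and ∂A_j/∂λ_j = −Σ_{k≠j}[A_j,A_k]/(λ_j−λ_k). For x ∈ Ω and λ ∈ ℂ set G_j(x,λ) = −A_j(x)/(λ − λ_j(x)). Then for all j, k, all x ∈ Ω and all λ ∈ ℂ ∖ {λ_1(x),…,λ_n(x)}: ∂G_j/∂λ_k (x,λ) − ∂G_k/∂λ_j (x,λ) + G_j(x,λ)·G_k(x,λ) − G_k(x,λ)·G_j(x,λ) = 0. -/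

import Mathlib

attribute [local instance] Matrix.normedAddCommGroup Matrix.normedSpace

/-- Partial derivative (in the `k`-th coordinate) of a function of `n` complex variables. -/
noncomputable def pdv {n : ℕ} {E : Type*} [NormedAddCommGroup E] [NormedSpace ℂ E]
    (k : Fin n) (f : (Fin n → ℂ) → E) (x : Fin n → ℂ) : E :=
  deriv (fun t : ℂ => f (Function.update x k t)) (x k)

/-- For a solution of the Schlesinger system, the deformation equations
`dΨ/dλ_j = G_jΨ` are compatible among themselves:
`∂G_j/∂λ_k − ∂G_k/∂λ_j + [G_j, G_k] = 0`. -/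
theorem deformation_compatibility {n N : ℕ} (hn : 2 ≤ n) (hN : 1 ≤ N)
    (Ω : Set (Fin n → ℂ)) (hΩ : IsOpen Ω)
    (hdist : ∀ x ∈ Ω, ∀ j k : Fin n, j ≠ k → x j ≠ x k)
    (A : Fin n → (Fin n → ℂ) → Matrix (Fin N) (Fin N) ℂ)
    (hA : ∀ j, DifferentiableOn ℂ (A j) Ω)
    (hSch₁ : ∀ x ∈ Ω, ∀ j k : Fin n, j ≠ k →
      pdv k (A j) x = (x j - x k)⁻¹ • (A j x * A k x - A k x * A j x))
    (hSch₂ : ∀ x ∈ Ω, ∀ j : Fin n,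
      pdv j (A j) x = -∑ k ∈ Finset.univ \ {j},
        (x j - x k)⁻¹ • (A j x * A k x - A k x * A j x))
    (G : Fin n → (Fin n → ℂ) → ℂ → Matrix (Fin N) (Fin N) ℂ)
    (hG : ∀ j x lam, G j x lam = -((lam - x j)⁻¹ • A j x)) :
    ∀ j k : Fin n, ∀ x ∈ Ω, ∀ lam : ℂ, (∀ i : Fin n, lam ≠ x i) →
      pdv k (fun y => G j y lam) x - pdv j (fun y => G k y lam) x
        + G j x lam * G k x lam - G k x lam * G j x lam = 0 := by
  intro j k x hx lam hlam
  by_cases hjk : j = k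
  · subst hjk
    simp
  · -- differentiability of the update map
    have hupd : ∀ m : Fin n, DifferentiableAt ℂ (fun t : ℂ => Function.update x m t) (x m) := by
      intro m
      rw [differentiableAt_pi]
      intro i
      by_cases h : i = m
      · subst h
        simp only [Function.update_self]
        exact differentiableAt_fun_id
      · simp only [Function.update_of_ne h]
        exact differentiableAt_const _
    have hAder : ∀ p m : Fin n, DifferentiableAt ℂ (fun t => A p (Function.update x m t)) (x m) := by
      intro p m
      have h1 : DifferentiableAt ℂ (A p) x := (hA p).differentiableAt (hΩ.mem_nhds hx)
      have h1' : DifferentiableAt ℂ (A p) (Function.update x m (x m)) := by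
        rwa [Function.update_eq_self]
      exact h1'.comp (x m) (hupd m)
    have key : ∀ p m : Fin n, p ≠ m →
        pdv m (fun y => G p y lam) x
          = -((lam - x p)⁻¹ • ((x p - x m)⁻¹ • (A p x * A m x - A m x * A p x))) := by
      intro p m hpm
      have heq : (fun t : ℂ => G p (Function.update x m t) lam)
          = fun t : ℂ => -((lam - x p)⁻¹ • A p (Function.update x m t)) := by
        funext t
        rw [hG, Function.update_of_ne hpm]
      unfold pdv
      rw [heq, deriv.fun_neg, deriv_fun_const_smul _ (hAder p m)]
      have : deriv (fun t => A p (Function.update x m t)) (x m) = pdv m (A p) x := rfl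
      erw [this, hSch₁ x hx p m hpm]
    rw [key j k hjk, key k j (Ne.symm hjk), hG, hG]
    have hj : lam - x j ≠ 0 := sub_ne_zero.mpr (hlam j)
    have hk : lam - x k ≠ 0 := sub_ne_zero.mpr (hlam k)
    have hjk' : x j - x k ≠ 0 := sub_ne_zero.mpr (hdist x hx j k hjk)
    have hkj' : x k - x j ≠ 0 := sub_ne_zero.mpr (hdist x hx k j (Ne.symm hjk))
    simp only [neg_mul, mul_neg, neg_neg, smul_mul_assoc, mul_smul_comm, smul_smul, smul_sub]
    match_scalars <;> field_simp <;> ring
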